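/- For a prime p, the number 2p belongs to all three sets A = {3x² − y² : x,y ∈ ℤ}, B = {x² + y² : x,y ∈ ℤ}, and C = {2(x² − xy + y²) : x,y ∈ ℤ} if and only if p ≡ 1 (mod 12). -/

import Mathlib

private lemma aux_no3_nat : ∀ b : ℕ, ∀ a : ℕ, a ^ 2 = 3 * b ^ 2 → b = 0 := by
  intro b
  induction b using Nat.strong_induction_on with
  | _ b ih =>
    intro a h
    have h3a : 3 ∣ a := by
      have h3 : Nat.Prime 3 := by norm_num
      exact h3.dvd_of_dvd_pow (h ▸ Dvd.intro _ rfl)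
    obtain ⟨c, rfl⟩ := h3a
    have hb : b ^ 2 = 3 * c ^ 2 := by nlinarith [h]
    rcases Nat.eq_zero_or_pos b with h0 | hbpos
    · exact h0
    · have hcb : c < b := by nlinarith
      have hc0 := ih c hcb b hb
      subst hc0
      simp at hb
      simpa using hb

private lemma aux_no3 (x y : ℤ) (hy : y ≠ 0) : x ^ 2 ≠ 3 * y ^ 2 := by
  intro h
  apply hy
  have hn : x.natAbs ^ 2 = 3 * y.natAbs ^ 2 := by
    have := congrArg Int.natAbs h
    simpa [Int.natAbs_mul, Int.natAbs_pow] using this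
  have := aux_no3_nat y.natAbs x.natAbs hn
  exact Int.natAbs_eq_zero.mp this

private lemma thue_lemma (p : ℕ) (hp : p.Prime) (a : ZMod p) :
    ∃ x y : ℤ, ¬(x = 0 ∧ y = 0) ∧ x ^ 2 < (p : ℤ) ∧ y ^ 2 < (p : ℤ) ∧
      ((x : ZMod p) = a * (y : ZMod p)) := by
  haveI : Fact p.Prime := ⟨hp⟩
  set m : ℕ := Nat.sqrt p with hm
  have hmlt : m ^ 2 < p := by
    have h2 : m ^ 2 ≤ p := Nat.sqrt_le' p
    rcases lt_or_eq_of_le h2 with h | h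
    · exact h
    · exfalso
      rcases hp.eq_one_or_self_of_dvd m ⟨m, by rw [← h, pow_two]⟩ with h1 | h1
      · rw [h1] at h; simp at h; exact hp.one_lt.ne h
      · rw [h1] at h; nlinarith [hp.two_le]
  have hcard : Fintype.card (ZMod p) < (Finset.Icc (0:ℤ) (m:ℤ) ×ˢ Finset.Icc (0:ℤ) (m:ℤ)).card := by
    rw [ZMod.card, Finset.card_product, Int.card_Icc]
    have : ((m:ℤ) + 1 - 0).toNat = m + 1 := by omega
    rw [this]
    have := Nat.lt_succ_sqrt p
    nlinarith [this]
  obtain ⟨c, hc, d, hd, hne, heq⟩ :=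
    Finset.exists_ne_map_eq_of_card_lt_of_maps_to
      (s := Finset.Icc (0:ℤ) (m:ℤ) ×ˢ Finset.Icc (0:ℤ) (m:ℤ))
      (t := (Finset.univ : Finset (ZMod p)))
      (by simpa [Finset.card_univ] using hcard)
      (f := fun uv : ℤ × ℤ => ((uv.1 : ZMod p) - a * (uv.2 : ZMod p)))
      (fun x _ => Finset.mem_univ _)
  simp only [Finset.mem_product, Finset.mem_Icc] at hc hd
  refine ⟨c.1 - d.1, c.2 - d.2, ?_, ?_, ?_, ?_⟩
  · rintro ⟨h1, h2⟩
    apply hne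
    exact Prod.ext (by linarith) (by linarith)
  · have := hc.1; have := hd.1
    have hmp : ((m:ℤ)) ^ 2 < (p:ℤ) := by exact_mod_cast hmlt
    nlinarith [hc.1.1, hc.1.2, hd.1.1, hd.1.2]
  · have hmp : ((m:ℤ)) ^ 2 < (p:ℤ) := by exact_mod_cast hmlt
    nlinarith [hc.2.1, hc.2.2, hd.2.1, hd.2.2]
  · push_cast
    linear_combination heq

private lemma sq3 (p : ℕ) (hp : p.Prime) (h1 : p % 12 = 1) :
    ∃ s : ZMod p, s * s = 3 := by
  haveI : Fact p.Prime := ⟨hp⟩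
  haveI : Fact (Nat.Prime 3) := ⟨by norm_num⟩
  have hp4 : p % 4 = 1 := by omega
  have hsq : IsSquare ((3 : ℕ) : ZMod p) := by
    rw [ZMod.exists_sq_eq_prime_iff_of_mod_four_eq_one hp4 (by norm_num)]
    have hpm : ((p : ℕ) : ZMod 3) = 1 := by
      rw [← ZMod.natCast_mod]
      have : p % 3 = 1 := by omega
      rw [this]; norm_num
    rw [hpm]; exact IsSquare.one
  obtain ⟨s, hs⟩ := hsq
  exact ⟨s, by rw [← hs]; norm_num⟩

private lemma sq_neg3 (p : ℕ) (hp : p.Prime) (h1 : p % 12 = 1) :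
    ∃ s : ZMod p, s * s = -3 := by
  haveI : Fact p.Prime := ⟨hp⟩
  obtain ⟨s, hs⟩ := sq3 p hp h1
  have hi : IsSquare (-1 : ZMod p) := by
    rw [ZMod.exists_sq_eq_neg_one_iff]
    omega
  obtain ⟨i, hi⟩ := hi
  exact ⟨i * s, by rw [show i*s*(i*s) = (i*i)*(s*s) by ring, ← hi, hs]; ring⟩

-- representation by 3x² - y²
private lemma repA (p : ℕ) (hp : p.Prime) (h1 : p % 12 = 1) :
    ∃ x y : ℤ, (2 * p : ℤ) = 3 * x ^ 2 - y ^ 2 := by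
  haveI : Fact p.Prime := ⟨hp⟩
  obtain ⟨s, hs⟩ := sq3 p hp h1
  obtain ⟨x, y, hxy0, hx2, hy2, hcong⟩ := thue_lemma p hp s
  have hdvd : (p : ℤ) ∣ x ^ 2 - 3 * y ^ 2 := by
    rw [← ZMod.intCast_zmod_eq_zero_iff_dvd]
    push_cast
    linear_combination ((x : ZMod p) + s * (y : ZMod p)) * hcong + (y : ZMod p)^2 * hs
  obtain ⟨k, hk⟩ := hdvd
  have hppos : (0:ℤ) < (p:ℤ) := by exact_mod_cast hp.pos
  have hk1 : k < 1 := by nlinarith [sq_nonneg y]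
  have hk2 : -3 < k := by nlinarith [sq_nonneg x]
  have hk0 : k ≠ 0 := by
    rintro rfl
    simp at hk
    have hx3 : x ^ 2 = 3 * y ^ 2 := by linarith
    rcases eq_or_ne y 0 with rfl | hy
    · have : x = 0 := by nlinarith
      exact hxy0 ⟨this, rfl⟩
    · exact aux_no3 x y hy hx3
  have hkm1 : k ≠ -1 := by
    rintro rfl
    have hpe : (p : ℤ) = 3 * y ^ 2 - x ^ 2 := by linarith
    have hc := congrArg (Int.cast : ℤ → ZMod 4) hpe
    push_cast at hc
    have hp4 : ((p : ℕ) : ZMod 4) = 1 := by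
      rw [← ZMod.natCast_mod]
      have : p % 4 = 1 := by omega
      rw [this]; norm_num
    rw [hp4] at hc
    have hd : ∀ u v : ZMod 4, (1 : ZMod 4) ≠ 3 * v ^ 2 - u ^ 2 := by decide
    exact hd _ _ hc
  have hkm2 : k = -2 := by omega
  subst hkm2
  exact ⟨y, x, by linarith⟩

-- p = a² + 3b²
private lemma repP3 (p : ℕ) (hp : p.Prime) (h1 : p % 12 = 1) :
    ∃ a b : ℤ, (p : ℤ) = a ^ 2 + 3 * b ^ 2 := by
  haveI : Fact p.Prime := ⟨hp⟩
  obtain ⟨s, hs⟩ := sq_neg3 p hp h1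
  obtain ⟨x, y, hxy0, hx2, hy2, hcong⟩ := thue_lemma p hp s
  have hdvd : (p : ℤ) ∣ x ^ 2 + 3 * y ^ 2 := by
    rw [← ZMod.intCast_zmod_eq_zero_iff_dvd]
    push_cast
    linear_combination ((x : ZMod p) + s * (y : ZMod p)) * hcong + (y : ZMod p)^2 * hs
  obtain ⟨k, hk⟩ := hdvd
  have hppos : (0:ℤ) < (p:ℤ) := by exact_mod_cast hp.pos
  have hk1 : k < 4 := by nlinarith
  have hk0 : 0 < k := by
    rcases lt_or_ge 0 k with h | h
    · exact h
    · exfalso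
      have hx0 : x ^ 2 + 3 * y ^ 2 ≤ 0 := by nlinarith
      have : x = 0 ∧ y = 0 := by constructor <;> nlinarith [sq_nonneg x, sq_nonneg y]
      exact hxy0 this
  have hk2 : k ≠ 2 := by
    rintro rfl
    have hpe : 2 * (p : ℤ) = x ^ 2 + 3 * y ^ 2 := by linarith
    have hc := congrArg (Int.cast : ℤ → ZMod 4) hpe
    push_cast at hc
    have hp4 : ((p : ℕ) : ZMod 4) = 1 := by
      rw [← ZMod.natCast_mod]
      have : p % 4 = 1 := by omega
      rw [this]; norm_num
    rw [hp4] at hc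
    have hd : ∀ u v : ZMod 4, (2 : ZMod 4) ≠ u ^ 2 + 3 * v ^ 2 := by decide
    apply hd x y
    calc (2 : ZMod 4) = 2 * 1 := by norm_num
    _ = (x : ZMod 4) ^ 2 + 3 * (y : ZMod 4) ^ 2 := hc
  rcases (by omega : k = 1 ∨ k = 3) with rfl | rfl
  · exact ⟨x, y, by linarith⟩
  · have h3x : (3:ℤ) ∣ x := by
      apply Int.prime_three.dvd_of_dvd_pow (n := 2)
      exact ⟨(p:ℤ) - y ^ 2, by linarith⟩
    obtain ⟨z, rfl⟩ := h3x
    exact ⟨y, z, by nlinarith⟩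

theorem stmt_15 (p : ℕ) (hp : p.Prime) :
    ((∃ x y : ℤ, (2 * p : ℤ) = 3 * x ^ 2 - y ^ 2) ∧
     (∃ x y : ℤ, (2 * p : ℤ) = x ^ 2 + y ^ 2) ∧
     (∃ x y : ℤ, (2 * p : ℤ) = 2 * (x ^ 2 - x * y + y ^ 2))) ↔
    p % 12 = 1 := by
  constructor
  · rintro ⟨-, ⟨x, y, hB⟩, ⟨u, v, hC⟩⟩
    have hpe : (p : ℤ) = u ^ 2 - u * v + v ^ 2 := by linarith
    have hd3 : ∀ a b : ZMod 3, (2 : ZMod 3) ≠ a ^ 2 - a * b + b ^ 2 := by decide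
    have hodd : p % 2 = 1 := by
      rcases hp.eq_two_or_odd with h2 | h
      · exfalso
        subst h2
        have h2' : (2 : ℤ) = u ^ 2 - u * v + v ^ 2 := by push_cast at hpe; linarith
        have hc := congrArg (Int.cast : ℤ → ZMod 3) h2'
        push_cast at hc
        exact hd3 _ _ hc
      · exact h
    have hp4 : p % 4 = 1 := by
      by_contra h
      have h3 : p % 4 = 3 := by omega
      have hmod : (2 * p) % 8 = 6 := by omega
      have hL : ((2 * (p:ℤ)) : ZMod 8) = 6 := by
        have h1 : ((2 * p : ℕ) : ZMod 8) = ((2 * p % 8 : ℕ) : ZMod 8) := (ZMod.natCast_mod _ _).symm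
        rw [hmod] at h1
        push_cast at h1 ⊢
        linear_combination h1
      have hc := congrArg (Int.cast : ℤ → ZMod 8) hB
      push_cast at hc hL
      rw [hL] at hc
      have hd8 : ∀ a b : ZMod 8, (6 : ZMod 8) ≠ a ^ 2 + b ^ 2 := by decide
      exact hd8 _ _ hc
    have hp3 : p % 3 = 1 := by
      have hne3 : p ≠ 3 := by rintro rfl; omega
      have h03 : p % 3 ≠ 0 := by
        intro h0
        rcases hp.eq_one_or_self_of_dvd 3 (Nat.dvd_of_mod_eq_zero h0) with h | h <;> omega
      by_contra h
      have h2 : p % 3 = 2 := by omega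
      have hP : ((p : ℕ) : ZMod 3) = 2 := by
        rw [← ZMod.natCast_mod, h2]; norm_num
      have hc := congrArg (Int.cast : ℤ → ZMod 3) hpe
      push_cast at hc
      rw [hP] at hc
      exact hd3 _ _ hc
    omega
  · intro h1
    haveI : Fact p.Prime := ⟨hp⟩
    refine ⟨repA p hp h1, ?_, ?_⟩
    · obtain ⟨a, b, hab⟩ := Nat.Prime.sq_add_sq (p := p) (by omega)
      exact ⟨(a:ℤ) + b, (a:ℤ) - b, by push_cast [← hab]; ring⟩
    · obtain ⟨a, b, hab⟩ := repP3 p hp h1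
      exact ⟨a + b, 2 * b, by rw [hab]; ring⟩
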